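/- For any n×d matrix Φ and positive integers a and b, the RIP constants satisfy δ_{ab} ≤ b · δ_{2a}. Consequently, in the regime ē, m → ∞ with ē = o(m), the OMP recovery condition δ_{m+1} < 1/(√(m+1)) implies δ_{m+1+ē} ≤ 2(1+o(1))/√(m+1). -/

import Mathlib

open Matrix Finset

noncomputable section

/-- Number of nonzero entries of a vector. -/
def sparsity {d : ℕ} (x : Fin d → ℝ) : ℕ :=
  (Finset.univ.filter fun i => x i ≠ 0).card

/-- Squared Euclidean norm. -/
def nsq {k : Type*} [Fintype k] (v : k → ℝ) : ℝ := ∑ i, v i ^ 2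

/-- Euclidean (ℓ₂) norm. -/
def l2 {k : Type*} [Fintype k] (v : k → ℝ) : ℝ := Real.sqrt (nsq v)

/-- `Φ` satisfies the order-`t` restricted isometry property with constant `δ`. -/
def satRIP {n d : ℕ} (Φ : Matrix (Fin n) (Fin d) ℝ) (t : ℕ) (δ : ℝ) : Prop :=
  ∀ x : Fin d → ℝ, sparsity x ≤ t →
    (1 - δ) * nsq x ≤ nsq (Φ.mulVec x) ∧ nsq (Φ.mulVec x) ≤ (1 + δ) * nsq x

/-- The order-`t` RIP constant of `Φ` : the smallest `δ ≥ 0` satisfying the RIP bounds. -/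
def ripConst {n d : ℕ} (Φ : Matrix (Fin n) (Fin d) ℝ) (t : ℕ) : ℝ :=
  sInf {δ : ℝ | 0 ≤ δ ∧ satRIP Φ t δ}

/-- The submatrix of `Φ` consisting of the columns indexed by `s`. -/
def cols {n d : ℕ} (Φ : Matrix (Fin n) (Fin d) ℝ) (s : Finset (Fin d)) :
    Matrix (Fin n) {i // i ∈ s} ℝ := Φ.submatrix id (fun i => (i : Fin d))

/-- Orthogonal projection `P{Φ_s} = Φ_s (Φ_sᵀ Φ_s)⁻¹ Φ_sᵀ` onto the column span of `Φ_s`. -/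
def proj {n d : ℕ} (Φ : Matrix (Fin n) (Fin d) ℝ) (s : Finset (Fin d)) :
    Matrix (Fin n) (Fin n) ℝ :=
  cols Φ s * ((cols Φ s)ᵀ * cols Φ s)⁻¹ * (cols Φ s)ᵀ

/-- Least-squares residual `v^{⊥s} = (I - P{Φ_s}) v`. -/
def residVec {n d : ℕ} (Φ : Matrix (Fin n) (Fin d) ℝ) (s : Finset (Fin d)) (y : Fin n → ℝ) :
    Fin n → ℝ := y - (proj Φ s).mulVec y

/-- The `i`-th column of `Φ`. -/
def col {n d : ℕ} (Φ : Matrix (Fin n) (Fin d) ℝ) (i : Fin d) : Fin n → ℝ := fun k => Φ k i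

/-- `x` is a least-squares estimate of `y` supported on `s`:
it is supported on `s` and minimizes `‖y - Φ z‖₂` over all `z` supported on `s`. -/
def leastSq {n d : ℕ} (Φ : Matrix (Fin n) (Fin d) ℝ) (y : Fin n → ℝ) (s : Finset (Fin d))
    (x : Fin d → ℝ) : Prop :=
  (∀ i, i ∉ s → x i = 0) ∧
  ∀ z : Fin d → ℝ, (∀ i, i ∉ s → z i = 0) → nsq (y - Φ.mulVec x) ≤ nsq (y - Φ.mulVec z)

/-- The support of a vector, as a `Finset`. -/
def spt {d : ℕ} (x : Fin d → ℝ) : Finset (Fin d) :=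
  Finset.univ.filter fun i => x i ≠ 0

-- inner product
def ip {k : Type*} [Fintype k] (u v : k → ℝ) : ℝ := ∑ i, u i * v i

lemma nsq_eq_ip {k : Type*} [Fintype k] (v : k → ℝ) : nsq v = ip v v := by
  simp [nsq, ip, sq]

lemma nsq_nonneg {k : Type*} [Fintype k] (v : k → ℝ) : 0 ≤ nsq v :=
  Finset.sum_nonneg fun i _ => sq_nonneg _

lemma l2_nonneg {k : Type*} [Fintype k] (v : k → ℝ) : 0 ≤ l2 v := Real.sqrt_nonneg _

lemma l2_sq {k : Type*} [Fintype k] (v : k → ℝ) : l2 v ^ 2 = nsq v :=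
  Real.sq_sqrt (nsq_nonneg v)

lemma ip_comm {k : Type*} [Fintype k] (u v : k → ℝ) : ip u v = ip v u := by
  simp [ip, mul_comm]

lemma nsq_add {k : Type*} [Fintype k] (u v : k → ℝ) :
    nsq (u + v) = nsq u + 2 * ip u v + nsq v := by
  simp only [nsq, ip, Pi.add_apply, Finset.mul_sum]
  rw [← Finset.sum_add_distrib, ← Finset.sum_add_distrib]
  exact Finset.sum_congr rfl fun i _ => by ring

lemma nsq_sub {k : Type*} [Fintype k] (u v : k → ℝ) :
    nsq (u - v) = nsq u - 2 * ip u v + nsq v := by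
  simp only [nsq, ip, Pi.sub_apply, Finset.mul_sum]
  rw [← Finset.sum_sub_distrib, ← Finset.sum_add_distrib]
  exact Finset.sum_congr rfl fun i _ => by ring

lemma sparsity_le_iff {d : ℕ} (x : Fin d → ℝ) (S : Finset (Fin d))
    (h : ∀ i, i ∉ S → x i = 0) : sparsity x ≤ S.card := by
  apply Finset.card_le_card
  intro i hi
  simp only [Finset.mem_filter] at hi
  by_contra hs
  exact hi.2 (h i hs)

-- sparsity of scalar multiple
lemma sparsity_smul_le {d : ℕ} (c : ℝ) (x : Fin d → ℝ) : sparsity (c • x) ≤ sparsity x := by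
  apply Finset.card_le_card
  intro i hi
  simp only [Finset.mem_filter, Finset.mem_univ, true_and, Pi.smul_apply, smul_eq_mul] at hi ⊢
  intro h; exact hi (by rw [h, mul_zero])

lemma sparsity_add_le {d : ℕ} (u v : Fin d → ℝ) :
    sparsity (u + v) ≤ sparsity u + sparsity v := by
  classical
  calc sparsity (u + v) ≤ ((Finset.univ.filter fun i => u i ≠ 0) ∪
      (Finset.univ.filter fun i => v i ≠ 0)).card := by
        apply Finset.card_le_card
        intro i hi
        simp only [Finset.mem_filter, Finset.mem_union, Finset.mem_univ, true_and,
          Pi.add_apply] at hi ⊢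
        by_contra h
        push_neg at h
        exact hi (by rw [h.1, h.2, add_zero])
  _ ≤ sparsity u + sparsity v := Finset.card_union_le _ _

lemma sparsity_sub_le {d : ℕ} (u v : Fin d → ℝ) :
    sparsity (u - v) ≤ sparsity u + sparsity v := by
  have := sparsity_add_le u (-v)
  have h2 : sparsity (-v) ≤ sparsity v := by
    apply Finset.card_le_card; intro i hi
    simp only [Finset.mem_filter, Finset.mem_univ, true_and, Pi.neg_apply, ne_eq,
      neg_eq_zero] at hi ⊢
    exact hi
  calc sparsity (u - v) = sparsity (u + (-v)) := by rw [sub_eq_add_neg]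
  _ ≤ sparsity u + sparsity (-v) := sparsity_add_le u (-v)
  _ ≤ sparsity u + sparsity v := by omega

-- the defining set
lemma ripSet_bddBelow {n d : ℕ} (Φ : Matrix (Fin n) (Fin d) ℝ) (t : ℕ) :
    BddBelow {δ : ℝ | 0 ≤ δ ∧ satRIP Φ t δ} :=
  ⟨0, fun δ hδ => hδ.1⟩

lemma nsq_mulVec_le {n d : ℕ} (Φ : Matrix (Fin n) (Fin d) ℝ) (x : Fin d → ℝ) :
    nsq (Φ.mulVec x) ≤ (∑ k, ∑ j, Φ k j ^ 2) * nsq x := by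
  rw [nsq, Finset.sum_mul]
  apply Finset.sum_le_sum
  intro k _
  calc (Φ.mulVec x k) ^ 2 = (∑ j, Φ k j * x j) ^ 2 := by
        simp [Matrix.mulVec, dotProduct]
  _ ≤ (∑ j, Φ k j ^ 2) * ∑ j, x j ^ 2 := Finset.sum_mul_sq_le_sq_mul_sq _ _ _
  _ = (∑ j, Φ k j ^ 2) * nsq x := rfl

lemma ripSet_nonempty {n d : ℕ} (Φ : Matrix (Fin n) (Fin d) ℝ) (t : ℕ) :
    Set.Nonempty {δ : ℝ | 0 ≤ δ ∧ satRIP Φ t δ} := by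
  refine ⟨1 + ∑ k, ∑ j, Φ k j ^ 2, ?_, ?_⟩
  · positivity
  · intro x _
    have hC : (0:ℝ) ≤ ∑ k, ∑ j, Φ k j ^ 2 := by positivity
    constructor
    · have : (1 - (1 + ∑ k, ∑ j, Φ k j ^ 2)) * nsq x ≤ 0 := by
        apply mul_nonpos_of_nonpos_of_nonneg _ (nsq_nonneg x)
        linarith
      exact this.trans (nsq_nonneg _)
    · calc nsq (Φ.mulVec x) ≤ (∑ k, ∑ j, Φ k j ^ 2) * nsq x := nsq_mulVec_le Φ x
      _ ≤ (1 + (1 + ∑ k, ∑ j, Φ k j ^ 2)) * nsq x := by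
          apply mul_le_mul_of_nonneg_right _ (nsq_nonneg x)
          linarith

lemma ripConst_nonneg {n d : ℕ} (Φ : Matrix (Fin n) (Fin d) ℝ) (t : ℕ) :
    0 ≤ ripConst Φ t :=
  le_csInf (ripSet_nonempty Φ t) fun δ hδ => hδ.1

lemma ripConst_le {n d : ℕ} (Φ : Matrix (Fin n) (Fin d) ℝ) (t : ℕ) {δ : ℝ}
    (h0 : 0 ≤ δ) (h : satRIP Φ t δ) : ripConst Φ t ≤ δ :=
  csInf_le (ripSet_bddBelow Φ t) ⟨h0, h⟩

lemma satRIP_ripConst {n d : ℕ} (Φ : Matrix (Fin n) (Fin d) ℝ) (t : ℕ) :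
    satRIP Φ t (ripConst Φ t) := by
  intro x hx
  constructor
  · rw [sub_mul, one_mul, sub_le_iff_le_add]
    rw [← sub_le_iff_le_add']
    -- nsq x - nsq (Φ.mulVec x) ≤ ripConst Φ t * nsq x
    apply le_of_forall_pos_le_add
    intro ε hε
    obtain ⟨δ, hδ, hlt⟩ := Real.lt_sInf_add_pos (ripSet_nonempty Φ t)
      (div_pos hε (lt_of_lt_of_le one_pos (le_add_of_nonneg_right (nsq_nonneg x))))
    have h1 := (hδ.2 x hx).1
    have hn := nsq_nonneg x
    have : nsq x - nsq (Φ.mulVec x) ≤ δ * nsq x := by nlinarith [h1]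
    calc nsq x - nsq (Φ.mulVec x) ≤ δ * nsq x := this
    _ ≤ (ripConst Φ t + ε / (1 + nsq x)) * nsq x := by
        apply mul_le_mul_of_nonneg_right _ hn
        exact le_of_lt hlt
    _ = ripConst Φ t * nsq x + (ε / (1 + nsq x)) * nsq x := by ring
    _ ≤ ripConst Φ t * nsq x + ε := by
        have h2 : (ε / (1 + nsq x)) * nsq x ≤ ε := by
          rw [div_mul_eq_mul_div, div_le_iff₀ (by linarith)]
          nlinarith
        linarith
  · rw [add_mul, one_mul, ← sub_le_iff_le_add']
    apply le_of_forall_pos_le_add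
    intro ε hε
    obtain ⟨δ, hδ, hlt⟩ := Real.lt_sInf_add_pos (ripSet_nonempty Φ t)
      (div_pos hε (lt_of_lt_of_le one_pos (le_add_of_nonneg_right (nsq_nonneg x))))
    have h1 := (hδ.2 x hx).2
    have hn := nsq_nonneg x
    calc nsq (Φ.mulVec x) - nsq x ≤ δ * nsq x := by nlinarith [h1]
    _ ≤ (ripConst Φ t + ε / (1 + nsq x)) * nsq x := by
        apply mul_le_mul_of_nonneg_right _ hn
        exact le_of_lt hlt
    _ = ripConst Φ t * nsq x + (ε / (1 + nsq x)) * nsq x := by ring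
    _ ≤ ripConst Φ t * nsq x + ε := by
        have h2 : (ε / (1 + nsq x)) * nsq x ≤ ε := by
          rw [div_mul_eq_mul_div, div_le_iff₀ (by linarith)]
          nlinarith
        linarith

lemma satRIP_mono {n d : ℕ} (Φ : Matrix (Fin n) (Fin d) ℝ) {t t' : ℕ} {δ : ℝ}
    (h : satRIP Φ t δ) (htt : t' ≤ t) : satRIP Φ t' δ :=
  fun x hx => h x (hx.trans htt)

lemma ripConst_mono {n d : ℕ} (Φ : Matrix (Fin n) (Fin d) ℝ) {t t' : ℕ} (htt : t' ≤ t) :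
    ripConst Φ t' ≤ ripConst Φ t :=
  ripConst_le Φ t' (ripConst_nonneg Φ t) (satRIP_mono Φ (satRIP_ripConst Φ t) htt)

lemma nsq_eq_zero_iff {k : Type*} [Fintype k] (v : k → ℝ) : nsq v = 0 ↔ v = 0 := by
  constructor
  · intro h
    funext i
    have := (Finset.sum_eq_zero_iff_of_nonneg (fun i _ => sq_nonneg (v i))).1 h i (Finset.mem_univ i)
    exact pow_eq_zero_iff (n := 2) (by norm_num) |>.1 this
  · intro h; simp [h, nsq]

lemma cross_bound {n d : ℕ} {Φ : Matrix (Fin n) (Fin d) ℝ} {T : ℕ} {δ : ℝ}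
    (hrip : satRIP Φ T δ) (u v : Fin d → ℝ)
    (hsp : sparsity u + sparsity v ≤ T) (hip : ip u v = 0) :
    |ip (Φ.mulVec u) (Φ.mulVec v)| ≤ δ * l2 u * l2 v := by
  by_cases hu : u = 0
  · simp [hu, ip, Matrix.mulVec_zero, l2, nsq]
  by_cases hv : v = 0
  · simp [hv, ip, Matrix.mulVec_zero, l2, nsq]
  have hnu : 0 < nsq u := lt_of_le_of_ne (nsq_nonneg u) (fun h => hu ((nsq_eq_zero_iff u).1 h.symm))
  have hnv : 0 < nsq v := lt_of_le_of_ne (nsq_nonneg v) (fun h => hv ((nsq_eq_zero_iff v).1 h.symm))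
  have hlu : 0 < l2 u := Real.sqrt_pos.2 hnu
  have hlv : 0 < l2 v := Real.sqrt_pos.2 hnv
  set t : ℝ := Real.sqrt (l2 v / l2 u) with ht
  have htpos : 0 < t := Real.sqrt_pos.2 (div_pos hlv hlu)
  set u' : Fin d → ℝ := t • u with hu'
  set v' : Fin d → ℝ := t⁻¹ • v with hv'
  have hts : t ^ 2 = l2 v / l2 u := Real.sq_sqrt (le_of_lt (div_pos hlv hlu))
  have hnsqu' : nsq u' = l2 u * l2 v := by
    have : nsq u' = t ^ 2 * nsq u := by
      simp only [hu', nsq, Pi.smul_apply, smul_eq_mul, mul_pow, Finset.mul_sum]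
    rw [this, hts, ← l2_sq u]
    field_simp
  have hnsqv' : nsq v' = l2 u * l2 v := by
    have : nsq v' = (t ^ 2)⁻¹ * nsq v := by
      simp only [hv', nsq, Pi.smul_apply, smul_eq_mul, mul_pow, Finset.mul_sum, inv_pow]
    rw [this, hts, ← l2_sq v]
    field_simp
  have hipuv' : ip u' v' = 0 := by
    have : ip u' v' = (t * t⁻¹) * ip u v := by
      simp only [hu', hv', ip, Pi.smul_apply, smul_eq_mul, Finset.mul_sum]
      exact Finset.sum_congr rfl fun i _ => by ring
    rw [this, hip, mul_zero]
  have hipΦ : ip (Φ.mulVec u') (Φ.mulVec v') = ip (Φ.mulVec u) (Φ.mulVec v) := by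
    have h1 : Φ.mulVec u' = t • Φ.mulVec u := by
      rw [hu']
      exact Φ.mulVec_smul t u
    have h2 : Φ.mulVec v' = t⁻¹ • Φ.mulVec v := by
      rw [hv']
      exact Φ.mulVec_smul t⁻¹ v
    rw [h1, h2]
    have : ∀ w z : Fin n → ℝ, ip (t • w) (t⁻¹ • z) = (t * t⁻¹) * ip w z := by
      intro w z
      simp only [ip, Pi.smul_apply, smul_eq_mul, Finset.mul_sum]
      exact Finset.sum_congr rfl fun i _ => by ring
    rw [this, mul_inv_cancel₀ (ne_of_gt htpos), one_mul]
  -- sparsity bounds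
  have hspu' : sparsity u' ≤ sparsity u := sparsity_smul_le t u
  have hspv' : sparsity v' ≤ sparsity v := sparsity_smul_le t⁻¹ v
  have hsadd : sparsity (u' + v') ≤ T := by
    calc sparsity (u' + v') ≤ sparsity u' + sparsity v' := sparsity_add_le u' v'
    _ ≤ T := by omega
  have hssub : sparsity (u' - v') ≤ T := by
    calc sparsity (u' - v') ≤ sparsity u' + sparsity v' := sparsity_sub_le u' v'
    _ ≤ T := by omega
  have hadd := hrip (u' + v') hsadd
  have hsub := hrip (u' - v') hssub
  have e1 : nsq (u' + v') = 2 * (l2 u * l2 v) := by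
    rw [nsq_add, hnsqu', hnsqv', hipuv']; ring
  have e2 : nsq (u' - v') = 2 * (l2 u * l2 v) := by
    rw [nsq_sub, hnsqu', hnsqv', hipuv']; ring
  have e3 : Φ.mulVec (u' + v') = Φ.mulVec u' + Φ.mulVec v' := Φ.mulVec_add u' v'
  have e4 : Φ.mulVec (u' - v') = Φ.mulVec u' - Φ.mulVec v' := Φ.mulVec_sub u' v'
  have e5 : nsq (Φ.mulVec (u' + v')) - nsq (Φ.mulVec (u' - v')) =
      4 * ip (Φ.mulVec u') (Φ.mulVec v') := by
    rw [e3, e4, nsq_add, nsq_sub]; ring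
  rw [abs_le]
  rw [e1] at hadd
  rw [e2] at hsub
  rw [← hipΦ]
  constructor
  · nlinarith [hadd.1, hsub.2, e5]
  · nlinarith [hadd.2, hsub.1, e5]

lemma mulVec_finsum {n d : ℕ} (Φ : Matrix (Fin n) (Fin d) ℝ) (s : Finset ℕ)
    (y : ℕ → Fin d → ℝ) :
    Φ.mulVec (∑ j ∈ s, y j) = ∑ j ∈ s, Φ.mulVec (y j) := by
  classical
  induction s using Finset.induction with
  | empty => simp [Matrix.mulVec_zero]
  | insert _ _ hj ih =>
      rw [Finset.sum_insert hj, Finset.sum_insert hj, Φ.mulVec_add, ih]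

lemma ip_sum_sum {k : Type*} [Fintype k] (s t : Finset ℕ) (f g : ℕ → k → ℝ) :
    ip (∑ j ∈ s, f j) (∑ l ∈ t, g l) = ∑ j ∈ s, ∑ l ∈ t, ip (f j) (g l) := by
  simp only [ip, Finset.sum_apply]
  rw [Finset.sum_congr rfl fun x _ => Finset.sum_mul_sum s t (fun j => f j x) (fun l => g l x)]
  rw [Finset.sum_comm]
  exact Finset.sum_congr rfl fun j _ => Finset.sum_comm

lemma block_bound {n d : ℕ} {Φ : Matrix (Fin n) (Fin d) ℝ} {T : ℕ} {δ : ℝ}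
    (hrip : satRIP Φ T δ) (hδ : 0 ≤ δ) (s : Finset ℕ) (y : ℕ → Fin d → ℝ)
    (h1 : ∀ j ∈ s, sparsity (y j) ≤ T)
    (h2 : ∀ j ∈ s, ∀ l ∈ s, j ≠ l → sparsity (y j) + sparsity (y l) ≤ T)
    (h3 : ∀ j ∈ s, ∀ l ∈ s, j ≠ l → ip (y j) (y l) = 0) :
    |nsq (Φ.mulVec (∑ j ∈ s, y j)) - nsq (∑ j ∈ s, y j)| ≤ δ * (∑ j ∈ s, l2 (y j)) ^ 2 := by
  have hA : nsq (Φ.mulVec (∑ j ∈ s, y j)) =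
      ∑ j ∈ s, ∑ l ∈ s, ip (Φ.mulVec (y j)) (Φ.mulVec (y l)) := by
    rw [nsq_eq_ip, mulVec_finsum, ip_sum_sum]
  have hB : nsq (∑ j ∈ s, y j) = ∑ j ∈ s, ∑ l ∈ s, ip (y j) (y l) := by
    rw [nsq_eq_ip, ip_sum_sum]
  rw [hA, hB, ← Finset.sum_sub_distrib]
  have hterm : ∀ j ∈ s, |(∑ l ∈ s, ip (Φ.mulVec (y j)) (Φ.mulVec (y l))) -
      ∑ l ∈ s, ip (y j) (y l)| ≤ ∑ l ∈ s, δ * l2 (y j) * l2 (y l) := by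
    intro j hj
    rw [← Finset.sum_sub_distrib]
    refine (Finset.abs_sum_le_sum_abs _ _).trans (Finset.sum_le_sum ?_)
    intro l hl
    by_cases hjl : j = l
    · subst hjl
      have hR := hrip (y j) (h1 j hj)
      have hc : l2 (y j) * l2 (y j) = nsq (y j) := by rw [← sq, l2_sq]
      have e1 : ip (Φ.mulVec (y j)) (Φ.mulVec (y j)) = nsq (Φ.mulVec (y j)) :=
        (nsq_eq_ip _).symm
      have e2 : ip (y j) (y j) = nsq (y j) := (nsq_eq_ip _).symm
      rw [mul_assoc, hc, abs_le, e1, e2]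
      have hn : 0 ≤ nsq (y j) := nsq_nonneg _
      constructor
      · nlinarith [hR.1]
      · nlinarith [hR.2]
    · rw [h3 j hj l hl hjl, sub_zero]
      exact cross_bound hrip (y j) (y l) (h2 j hj l hl hjl) (h3 j hj l hl hjl)
  calc |∑ j ∈ s, ((∑ l ∈ s, ip (Φ.mulVec (y j)) (Φ.mulVec (y l))) - ∑ l ∈ s, ip (y j) (y l))|
      ≤ ∑ j ∈ s, |(∑ l ∈ s, ip (Φ.mulVec (y j)) (Φ.mulVec (y l))) - ∑ l ∈ s, ip (y j) (y l)| :=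
        Finset.abs_sum_le_sum_abs _ _
    _ ≤ ∑ j ∈ s, ∑ l ∈ s, δ * l2 (y j) * l2 (y l) := Finset.sum_le_sum hterm
    _ = δ * (∑ j ∈ s, l2 (y j)) ^ 2 := by
        rw [sq, Finset.sum_mul_sum, Finset.mul_sum]
        exact Finset.sum_congr rfl fun j _ => by
          rw [Finset.mul_sum]
          exact Finset.sum_congr rfl fun l _ => by ring

/-- restriction of a vector to a finset -/
def restr {d : ℕ} (B : Finset (Fin d)) (x : Fin d → ℝ) : Fin d → ℝ :=
  fun i => if i ∈ B then x i else 0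

lemma sparsity_restr_le {d : ℕ} (B : Finset (Fin d)) (x : Fin d → ℝ) :
    sparsity (restr B x) ≤ B.card :=
  sparsity_le_iff _ B fun i hi => by simp [restr, hi]

lemma ip_restr_eq_zero {d : ℕ} {B C : Finset (Fin d)} (h : Disjoint B C) (x : Fin d → ℝ) :
    ip (restr B x) (restr C x) = 0 := by
  apply Finset.sum_eq_zero
  intro i _
  simp only [restr]
  by_cases hB : i ∈ B
  · have hC : i ∉ C := Finset.disjoint_left.1 h hB
    simp [hB, hC]
  · simp [hB]

lemma nsq_restr {d : ℕ} (B : Finset (Fin d)) (x : Fin d → ℝ) :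
    nsq (restr B x) = ∑ i ∈ B, x i ^ 2 := by
  rw [nsq, ← Finset.sum_filter_add_sum_filter_not Finset.univ (fun i => i ∈ B)]
  have h1 : ∀ i ∈ Finset.univ.filter (fun i => i ∈ B), restr B x i ^ 2 = x i ^ 2 := by
    intro i hi; simp only [Finset.mem_filter] at hi; simp [restr, hi.2]
  have h2 : ∀ i ∈ Finset.univ.filter (fun i => ¬ i ∈ B), restr B x i ^ 2 = 0 := by
    intro i hi; simp only [Finset.mem_filter] at hi; simp [restr, hi.2]
  rw [Finset.sum_congr rfl h1, Finset.sum_congr rfl h2, Finset.sum_const_zero, add_zero]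
  congr 1
  ext i; simp

lemma sum_restr {d : ℕ} (b : ℕ) (B : ℕ → Finset (Fin d)) (x : Fin d → ℝ)
    (hdisj : ∀ j l, j ≠ l → Disjoint (B j) (B l))
    (hcov : ∀ i, x i ≠ 0 → i ∈ (Finset.range b).biUnion B) :
    ∑ j ∈ Finset.range b, restr (B j) x = x := by
  funext i
  rw [Finset.sum_apply]
  by_cases hx : x i = 0
  · rw [hx]
    apply Finset.sum_eq_zero
    intro j _
    simp only [restr]
    split <;> simp [hx]
  · obtain ⟨j0, hj0, hij0⟩ := Finset.mem_biUnion.1 (hcov i hx)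
    rw [Finset.sum_eq_single j0]
    · simp [restr, hij0]
    · intro j hj hne
      have : i ∉ B j := fun hmem =>
        (Finset.disjoint_left.1 (hdisj j j0 hne) hmem) hij0
      simp [restr, this]
    · intro h; exact absurd hj0 h

lemma nsq_sum_orth {d : ℕ} (s : Finset ℕ) (y : ℕ → Fin d → ℝ)
    (h3 : ∀ j ∈ s, ∀ l ∈ s, j ≠ l → ip (y j) (y l) = 0) :
    nsq (∑ j ∈ s, y j) = ∑ j ∈ s, nsq (y j) := by
  rw [nsq_eq_ip, ip_sum_sum]
  apply Finset.sum_congr rfl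
  intro j hj
  rw [Finset.sum_eq_single j]
  · exact (nsq_eq_ip _).symm
  · intro l hl hne; exact h3 j hj l hl (Ne.symm hne) ▸ h3 j hj l hl (fun h => hne h.symm)
  · intro h; exact absurd hj h

lemma exists_partition {d : ℕ} (a : ℕ) (ha : 0 < a) :
    ∀ (b : ℕ) (U : Finset (Fin d)), U.card ≤ a * b →
    ∃ B : ℕ → Finset (Fin d), (∀ j, (B j).card ≤ a) ∧
      (∀ j l, j ≠ l → Disjoint (B j) (B l)) ∧
      (Finset.range b).biUnion B = U ∧ (∀ j, b ≤ j → B j = ∅) := by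
  intro b
  induction b with
  | zero =>
      intro U hU
      simp only [Nat.mul_zero, Nat.le_zero, Finset.card_eq_zero] at hU
      exact ⟨fun _ => ∅, fun j => by simp [Nat.le_of_lt ha], fun j l _ => by simp,
        by simp [hU], fun _ _ => rfl⟩
  | succ b ih =>
      intro U hU
      obtain ⟨S, hSU, hScard⟩ := Finset.exists_subset_card_eq (s := U) (n := min a U.card)
        (min_le_right _ _)
      have hUS : (U \ S).card ≤ a * b := by
        rw [Finset.card_sdiff_of_subset hSU, hScard]
        have hm : a * (b+1) = a*b + a := by ring
        rcases Nat.le_total a U.card with h | h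
        · rw [min_eq_left h]; omega
        · rw [min_eq_right h]; omega
      obtain ⟨B', h1', h2', h3', h4'⟩ := ih (U \ S) hUS
      refine ⟨fun j => if j = b then S else B' j, ?_, ?_, ?_, ?_⟩
      · intro j
        by_cases hj : j = b
        · simp [hj, hScard]
        · simp [hj, h1' j]
      · intro j l hne
        have key : ∀ j', j' ≠ b → B' j' ⊆ U \ S := by
          intro j' hj'
          by_cases hlt : j' < b
          · rw [← h3']
            intro i hi
            exact Finset.mem_biUnion.2 ⟨j', Finset.mem_range.2 hlt, hi⟩
          · rw [h4' j' (by omega)]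
            exact Finset.empty_subset _
        have hdSU : Disjoint S (U \ S) := Finset.disjoint_sdiff
        show Disjoint (if j = b then S else B' j) (if l = b then S else B' l)
        by_cases hj : j = b
        · subst hj
          rw [if_pos rfl, if_neg hne.symm]
          exact hdSU.mono_right (key l hne.symm)
        · by_cases hl : l = b
          · subst hl
            rw [if_pos rfl, if_neg hj]
            exact (hdSU.mono_right (key j hj)).symm
          · rw [if_neg hj, if_neg hl]
            exact h2' j l hne
      · rw [Finset.range_add_one, Finset.biUnion_insert]
        have hb : (if b = b then S else B' b) = S := if_pos rfl
        have hcg : ∀ j ∈ Finset.range b, (if j = b then S else B' j) = B' j := by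
          intro j hj
          exact if_neg (by simp at hj; omega)
        rw [hb, Finset.biUnion_congr rfl hcg, h3', Finset.union_comm,
          Finset.sdiff_union_of_subset hSU]
      · intro j hj
        show (if j = b then S else B' j) = ∅
        rw [if_neg (by omega), h4' j (by omega)]

lemma exists_top {d : ℕ} (f : Fin d → ℝ) :
    ∀ (s : ℕ) (U : Finset (Fin d)), ∃ S, S ⊆ U ∧ S.card = min s U.card ∧
      ∀ i ∈ U, i ∉ S → ∀ j ∈ S, f i ≤ f j := by
  intro s
  induction s with
  | zero => intro U; exact ⟨∅, Finset.empty_subset _, by simp, fun i _ _ j hj => absurd hj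
      (Finset.notMem_empty j)⟩
  | succ s ih =>
      intro U
      rcases Finset.eq_empty_or_nonempty U with hU | hU
      · exact ⟨∅, Finset.empty_subset _, by simp [hU], fun i hi => absurd hi (by simp [hU])⟩
      · obtain ⟨j0, hj0, hmax⟩ := Finset.exists_max_image U f hU
        obtain ⟨S', hS'sub, hS'card, hS'max⟩ := ih (U.erase j0)
        refine ⟨insert j0 S', ?_, ?_, ?_⟩
        · intro i hi
          rcases Finset.mem_insert.1 hi with h | h
          · exact h ▸ hj0
          · exact Finset.erase_subset _ _ (hS'sub h)
        · have hj0S' : j0 ∉ S' := fun h => (Finset.notMem_erase j0 U) (hS'sub h)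
          rw [Finset.card_insert_of_notMem hj0S', hS'card,
            Finset.card_erase_of_mem hj0]
          have : 1 ≤ U.card := Finset.card_pos.2 hU
          omega
        · intro i hiU hiS j hj
          have hine : i ≠ j0 := fun h => hiS (h ▸ Finset.mem_insert_self j0 S')
          have hiS' : i ∉ S' := fun h => hiS (Finset.mem_insert_of_mem h)
          rcases Finset.mem_insert.1 hj with h | h
          · exact h ▸ hmax i hiU
          · exact hS'max i (Finset.mem_erase.2 ⟨hine, hiU⟩) hiS' j h

lemma satRIP_combine {n d : ℕ} (Φ : Matrix (Fin n) (Fin d) ℝ) {a b : ℕ} (ha : 0 < a)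
    {δ : ℝ} (hδ : 0 ≤ δ) (h : satRIP Φ (2 * a) δ) : satRIP Φ (a * b) ((b : ℝ) * δ) := by
  intro x hx
  obtain ⟨B, h1, h2, h3, _⟩ := exists_partition a ha b
    (Finset.univ.filter fun i => x i ≠ 0) hx
  set y : ℕ → Fin d → ℝ := fun j => restr (B j) x with hy
  have hcov : ∀ i, x i ≠ 0 → i ∈ (Finset.range b).biUnion B := by
    intro i hi
    rw [h3]
    simp [hi]
  have hsum : ∑ j ∈ Finset.range b, y j = x := sum_restr b B x h2 hcov
  have horth : ∀ j ∈ Finset.range b, ∀ l ∈ Finset.range b, j ≠ l → ip (y j) (y l) = 0 :=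
    fun j _ l _ hne => ip_restr_eq_zero (h2 j l hne) x
  have hkey := block_bound h hδ (Finset.range b) y
    (fun j _ => (sparsity_restr_le _ _).trans ((h1 j).trans (by omega)))
    (fun j _ l _ hne => by
      simp only [hy]
      have hj' := (sparsity_restr_le (B j) x).trans (h1 j)
      have hl' := (sparsity_restr_le (B l) x).trans (h1 l)
      omega)
    horth
  rw [hsum] at hkey
  have hnsq : ∑ j ∈ Finset.range b, nsq (y j) = nsq x := by
    rw [← nsq_sum_orth _ _ horth, hsum]
  have hCS : (∑ j ∈ Finset.range b, l2 (y j)) ^ 2 ≤ (b : ℝ) * nsq x := by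
    have hcs := Finset.sum_mul_sq_le_sq_mul_sq (Finset.range b)
      (fun _ => (1 : ℝ)) (fun j => l2 (y j))
    simp only [one_mul, one_pow, Finset.sum_const, Finset.card_range, nsmul_eq_mul,
      mul_one] at hcs
    calc (∑ j ∈ Finset.range b, l2 (y j)) ^ 2 ≤ (b : ℝ) * ∑ j ∈ Finset.range b, l2 (y j) ^ 2 :=
          hcs
    _ = (b : ℝ) * nsq x := by
        rw [Finset.sum_congr rfl fun j _ => l2_sq (y j), hnsq]
  have habs : |nsq (Φ.mulVec x) - nsq x| ≤ (b : ℝ) * δ * nsq x := by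
    calc |nsq (Φ.mulVec x) - nsq x| ≤ δ * (∑ j ∈ Finset.range b, l2 (y j)) ^ 2 := hkey
    _ ≤ δ * ((b : ℝ) * nsq x) := mul_le_mul_of_nonneg_left hCS hδ
    _ = (b : ℝ) * δ * nsq x := by ring
  rw [abs_le] at habs
  constructor
  · nlinarith [habs.1]
  · nlinarith [habs.2]

lemma part_one {n d : ℕ} (Φ : Matrix (Fin n) (Fin d) ℝ) (a b : ℕ) (ha : 0 < a) (_ : 0 < b) :
    ripConst Φ (a * b) ≤ (b : ℝ) * ripConst Φ (2 * a) := by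
  have h0 := ripConst_nonneg Φ (2 * a)
  exact ripConst_le Φ (a * b) (by positivity)
    (satRIP_combine Φ ha h0 (satRIP_ripConst Φ (2 * a)))

lemma refined_bound {n d : ℕ} (Φ : Matrix (Fin n) (Fin d) ℝ) (a E : ℕ) (ha : 0 < a) :
    ripConst Φ (2 * a + E) ≤ ripConst Φ (2 * a) *
      (Real.sqrt 2 + Real.sqrt (((E / a + 1 : ℕ) : ℝ) * (E : ℝ) / (2 * (a : ℝ)))) ^ 2 := by
  set δ := ripConst Φ (2 * a) with hδdef
  have hδ0 : 0 ≤ δ := ripConst_nonneg Φ (2 * a)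
  have hrip : satRIP Φ (2 * a) δ := satRIP_ripConst Φ (2 * a)
  set η := Real.sqrt (((E / a + 1 : ℕ) : ℝ) * (E : ℝ) / (2 * (a : ℝ))) with hηdef
  have hη0 : 0 ≤ η := Real.sqrt_nonneg _
  have hfac : (1 : ℝ) ≤ (Real.sqrt 2 + η) ^ 2 := by
    have h2 : (1 : ℝ) ≤ Real.sqrt 2 := by
      rw [show (1:ℝ) = Real.sqrt 1 by simp]
      exact Real.sqrt_le_sqrt (by norm_num)
    nlinarith
  apply ripConst_le Φ _ (by positivity)
  intro x hx
  set U : Finset (Fin d) := Finset.univ.filter fun i => x i ≠ 0 with hUdef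
  have hUcard : U.card ≤ 2 * a + E := hx
  have hmain : |nsq (Φ.mulVec x) - nsq x| ≤ δ * (Real.sqrt 2 + η) ^ 2 * nsq x := by
    by_cases hsmall : U.card ≤ 2 * a
    · -- x is already 2a-sparse
      have := hrip x hsmall
      have hn := nsq_nonneg x
      have h1 : |nsq (Φ.mulVec x) - nsq x| ≤ δ * nsq x := by
        rw [abs_le]; constructor <;> nlinarith [this.1, this.2]
      calc |nsq (Φ.mulVec x) - nsq x| ≤ δ * nsq x := h1
      _ ≤ δ * (Real.sqrt 2 + η) ^ 2 * nsq x := by nlinarith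
    · push_neg at hsmall
      obtain ⟨S, hSU, hScard, hStop⟩ := exists_top (fun i => x i ^ 2) (2 * a) U
      rw [min_eq_left (le_of_lt hsmall)] at hScard
      set W : Finset (Fin d) := U \ S with hWdef
      have hWcard : W.card ≤ E := by
        rw [hWdef, Finset.card_sdiff_of_subset hSU, hScard]; omega
      obtain ⟨S1, hS1sub, hS1card⟩ := Finset.exists_subset_card_eq (s := S) (n := a) (by omega)
      set S2 : Finset (Fin d) := S \ S1 with hS2def
      have hS2card : S2.card = a := by
        rw [hS2def, Finset.card_sdiff_of_subset hS1sub, hScard, hS1card]; omega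
      set r : ℕ := E / a + 1 with hrdef
      have hEr : E ≤ a * r := by
        have h1 := Nat.div_add_mod E a
        have h2 := Nat.mod_lt E ha
        have hm : a * (E / a + 1) = a * (E / a) + a := by ring
        rw [hrdef]; omega
      clear_value r
      obtain ⟨B', hB1, hB2, hB3, hB4⟩ := exists_partition a ha r W (hWcard.trans hEr)
      have hB'W : ∀ j, B' j ⊆ W := by
        intro j
        by_cases hj : j < r
        · rw [← hB3]; intro i hi; exact Finset.mem_biUnion.2 ⟨j, Finset.mem_range.2 hj, hi⟩
        · rw [hB4 j (by omega)]; exact Finset.empty_subset _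
      set B : ℕ → Finset (Fin d) :=
        fun j => if j = 0 then S1 else if j = 1 then S2 else B' (j - 2) with hBdef
      have hScover : S1 ∪ S2 = S := by
        rw [hS2def, Finset.union_comm, Finset.sdiff_union_of_subset hS1sub]
      have hd12 : Disjoint S1 S2 := by
        rw [hS2def]; exact Finset.disjoint_sdiff
      have hdSW : Disjoint S W := by
        rw [hWdef]; exact Finset.disjoint_sdiff
      have hBcard : ∀ j, (B j).card ≤ a := by
        intro j
        rw [hBdef]
        by_cases h0 : j = 0
        · simp [h0, hS1card]
        · by_cases h1 : j = 1
          · simp [h0, h1, hS2card]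
          · simp only [h0, h1, if_false]; exact hB1 _
      have hS2S : S2 ⊆ S := by rw [hS2def]; exact Finset.sdiff_subset
      have hd1B : ∀ j', Disjoint S1 (B' j') :=
        fun j' => (hdSW.mono_left hS1sub).mono_right (hB'W j')
      have hd2B : ∀ j', Disjoint S2 (B' j') :=
        fun j' => (hdSW.mono_left hS2S).mono_right (hB'W j')
      have hBdisj : ∀ j l, j ≠ l → Disjoint (B j) (B l) := by
        intro j l hne
        show Disjoint (if j = 0 then S1 else if j = 1 then S2 else B' (j - 2))
          (if l = 0 then S1 else if l = 1 then S2 else B' (l - 2))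
        by_cases hj0 : j = 0
        · rw [if_pos hj0]
          by_cases hl0 : l = 0
          · exact absurd (hj0.trans hl0.symm) hne
          · rw [if_neg hl0]
            by_cases hl1 : l = 1
            · rw [if_pos hl1]; exact hd12
            · rw [if_neg hl1]; exact hd1B _
        · rw [if_neg hj0]
          by_cases hj1 : j = 1
          · rw [if_pos hj1]
            by_cases hl0 : l = 0
            · rw [if_pos hl0]; exact hd12.symm
            · rw [if_neg hl0]
              by_cases hl1 : l = 1
              · exact absurd (hj1.trans hl1.symm) hne
              · rw [if_neg hl1]; exact hd2B _
          · rw [if_neg hj1]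
            by_cases hl0 : l = 0
            · rw [if_pos hl0]; exact (hd1B _).symm
            · rw [if_neg hl0]
              by_cases hl1 : l = 1
              · rw [if_pos hl1]; exact (hd2B _).symm
              · rw [if_neg hl1]; exact hB2 _ _ (by omega)
      have hcov : ∀ i, x i ≠ 0 → i ∈ (Finset.range (r + 2)).biUnion B := by
        intro i hi
        have hiU : i ∈ U := by rw [hUdef]; simp [hi]
        by_cases hiS : i ∈ S
        · rw [← hScover] at hiS
          rcases Finset.mem_union.1 hiS with h | h
          · exact Finset.mem_biUnion.2 ⟨0, by simp, by rw [hBdef]; simpa using h⟩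
          · exact Finset.mem_biUnion.2 ⟨1, by simp, by rw [hBdef]; simpa using h⟩
        · have hiW : i ∈ W := by rw [hWdef]; exact Finset.mem_sdiff.2 ⟨hiU, hiS⟩
          rw [← hB3] at hiW
          obtain ⟨j, hj, hij⟩ := Finset.mem_biUnion.1 hiW
          refine Finset.mem_biUnion.2 ⟨j + 2, ?_, ?_⟩
          · simp only [Finset.mem_range] at hj ⊢; omega
          · show i ∈ (if j + 2 = 0 then S1 else if j + 2 = 1 then S2 else B' (j + 2 - 2))
            rw [if_neg (by omega), if_neg (by omega)]
            simpa using hij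
      set y : ℕ → Fin d → ℝ := fun j => restr (B j) x with hy
      have hsum : ∑ j ∈ Finset.range (r + 2), y j = x := sum_restr (r + 2) B x hBdisj hcov
      have horth : ∀ j ∈ Finset.range (r + 2), ∀ l ∈ Finset.range (r + 2), j ≠ l →
          ip (y j) (y l) = 0 := fun j _ l _ hne => ip_restr_eq_zero (hBdisj j l hne) x
      have hkey := block_bound hrip hδ0 (Finset.range (r + 2)) y
        (fun j _ => (sparsity_restr_le _ _).trans ((hBcard j).trans (by omega)))
        (fun j _ l _ hne => by
          simp only [hy]
          have hj' := (sparsity_restr_le (B j) x).trans (hBcard j)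
          have hl' := (sparsity_restr_le (B l) x).trans (hBcard l)
          omega)
        horth
      rw [hsum] at hkey
      have hnsq : ∑ j ∈ Finset.range (r + 2), nsq (y j) = nsq x := by
        rw [← nsq_sum_orth _ _ horth, hsum]
      -- bound the sum of norms
      have hl2x : 0 ≤ l2 x := l2_nonneg x
      have hnsqx : nsq x = l2 x ^ 2 := (l2_sq x).symm
      -- head bound
      have hhead : l2 (y 0) + l2 (y 1) ≤ Real.sqrt 2 * l2 x := by
        have h01 : nsq (y 0) + nsq (y 1) ≤ nsq x := by
          rw [← hnsq]
          have : ∑ j ∈ ({0, 1} : Finset ℕ), nsq (y j) ≤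
              ∑ j ∈ Finset.range (r + 2), nsq (y j) :=
            Finset.sum_le_sum_of_subset_of_nonneg
              (by
                intro j hj
                simp only [Finset.mem_insert, Finset.mem_singleton] at hj
                rcases hj with h | h <;> subst h <;> exact Finset.mem_range.2 (by omega))
              (fun j _ _ => nsq_nonneg _)
          simpa using this
        have hsq : (l2 (y 0) + l2 (y 1)) ^ 2 ≤ 2 * nsq x := by
          have e0 := l2_sq (y 0); have e1 := l2_sq (y 1)
          nlinarith [sq_nonneg (l2 (y 0) - l2 (y 1)), l2_nonneg (y 0), l2_nonneg (y 1)]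
        calc l2 (y 0) + l2 (y 1) = Real.sqrt ((l2 (y 0) + l2 (y 1)) ^ 2) :=
              (Real.sqrt_sq (add_nonneg (l2_nonneg _) (l2_nonneg _))).symm
        _ ≤ Real.sqrt (2 * nsq x) := Real.sqrt_le_sqrt hsq
        _ = Real.sqrt 2 * l2 x := by
            rw [Real.sqrt_mul (by norm_num)]; rfl
      -- tail bound
      have htailptwise : ∀ i ∈ W, x i ^ 2 ≤ nsq x / (2 * a) := by
        intro i hiW
        rw [hWdef] at hiW
        obtain ⟨hiU, hiS⟩ := Finset.mem_sdiff.1 hiW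
        have hbound : ∀ j ∈ S, x i ^ 2 ≤ x j ^ 2 := hStop i hiU hiS
        have hsumS : (2 * a : ℝ) * x i ^ 2 ≤ ∑ j ∈ S, x j ^ 2 := by
          calc (2 * a : ℝ) * x i ^ 2 = ∑ _j ∈ S, x i ^ 2 := by
                rw [Finset.sum_const, hScard]; push_cast; ring
          _ ≤ ∑ j ∈ S, x j ^ 2 := Finset.sum_le_sum hbound
        have hsub : ∑ j ∈ S, x j ^ 2 ≤ nsq x :=
          Finset.sum_le_sum_of_subset_of_nonneg (Finset.subset_univ S)
            (fun j _ _ => sq_nonneg _)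
        have hap : (0:ℝ) < 2 * (a:ℝ) := by
          have : (0:ℝ) < (a:ℝ) := by exact_mod_cast ha
          linarith
        rw [le_div_iff₀ hap]
        calc x i ^ 2 * (2 * a) = (2 * a : ℝ) * x i ^ 2 := by ring
        _ ≤ nsq x := hsumS.trans hsub
      have htailnsq : ∑ j ∈ Finset.range r, nsq (y (j + 2)) ≤ (E : ℝ) * nsq x / (2 * a) := by
        have hstep : ∀ j ∈ Finset.range r, nsq (y (j + 2)) = ∑ i ∈ B' j, x i ^ 2 := by
          intro j _
          have : B (j + 2) = B' j := by
            show (if j + 2 = 0 then S1 else if j + 2 = 1 then S2 else B' (j + 2 - 2)) = B' j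
            rw [if_neg (by omega), if_neg (by omega)]
            congr 1
          rw [hy]
          show nsq (restr (B (j+2)) x) = _
          rw [this, nsq_restr]
        rw [Finset.sum_congr rfl hstep, ← Finset.sum_biUnion
          (fun j _ l _ hne => hB2 j l hne), hB3]
        calc ∑ i ∈ W, x i ^ 2 ≤ ∑ _i ∈ W, nsq x / (2 * a) :=
              Finset.sum_le_sum htailptwise
        _ = W.card * (nsq x / (2 * a)) := by rw [Finset.sum_const, nsmul_eq_mul]
        _ ≤ (E : ℝ) * nsq x / (2 * a) := by
            have hc : (W.card : ℝ) ≤ (E : ℝ) := by exact_mod_cast hWcard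
            have hn := nsq_nonneg x
            have hap : (0:ℝ) < 2 * a := by positivity
            rw [mul_div_assoc]
            exact mul_le_mul_of_nonneg_right hc (by positivity)
      have htail : ∑ j ∈ Finset.range r, l2 (y (j + 2)) ≤ η * l2 x := by
        have hcs := Finset.sum_mul_sq_le_sq_mul_sq (Finset.range r)
          (fun _ => (1 : ℝ)) (fun j => l2 (y (j + 2)))
        simp only [one_mul, one_pow, Finset.sum_const, Finset.card_range, nsmul_eq_mul,
          mul_one] at hcs
        have hsq : (∑ j ∈ Finset.range r, l2 (y (j + 2))) ^ 2 ≤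
            (r : ℝ) * ((E : ℝ) * nsq x / (2 * a)) := by
          calc (∑ j ∈ Finset.range r, l2 (y (j + 2))) ^ 2
              ≤ (r : ℝ) * ∑ j ∈ Finset.range r, l2 (y (j + 2)) ^ 2 := hcs
          _ = (r : ℝ) * ∑ j ∈ Finset.range r, nsq (y (j + 2)) := by
              rw [Finset.sum_congr rfl fun j _ => l2_sq (y (j + 2))]
          _ ≤ (r : ℝ) * ((E : ℝ) * nsq x / (2 * a)) := by
              apply mul_le_mul_of_nonneg_left htailnsq (by positivity)
        have hre : (r : ℝ) * ((E : ℝ) * nsq x / (2 * a)) =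
            ((r : ℝ) * (E : ℝ) / (2 * a)) * nsq x := by ring
        calc ∑ j ∈ Finset.range r, l2 (y (j + 2))
            = Real.sqrt ((∑ j ∈ Finset.range r, l2 (y (j + 2))) ^ 2) :=
              (Real.sqrt_sq (Finset.sum_nonneg fun j _ => l2_nonneg _)).symm
        _ ≤ Real.sqrt (((r : ℝ) * (E : ℝ) / (2 * a)) * nsq x) := by
            apply Real.sqrt_le_sqrt; rw [← hre]; exact hsq
        _ = η * l2 x := by
            rw [Real.sqrt_mul (by positivity), hηdef, hrdef]
            rfl
      -- combine
      have hsumnorm : ∑ j ∈ Finset.range (r + 2), l2 (y j) ≤ (Real.sqrt 2 + η) * l2 x := by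
        have hsplit : ∑ j ∈ Finset.range (r + 2), l2 (y j) =
            (∑ j ∈ Finset.range r, l2 (y (j + 2))) + l2 (y 1) + l2 (y 0) := by
          rw [Finset.sum_range_succ' (fun j => l2 (y j)) (r + 1),
            Finset.sum_range_succ' (fun j => l2 (y (j + 1))) r]
        rw [hsplit]
        calc (∑ j ∈ Finset.range r, l2 (y (j + 2))) + l2 (y 1) + l2 (y 0)
            ≤ η * l2 x + (l2 (y 0) + l2 (y 1)) := by
              have := htail; linarith
        _ ≤ η * l2 x + Real.sqrt 2 * l2 x := by linarith [hhead]
        _ = (Real.sqrt 2 + η) * l2 x := by ring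
      have hsn0 : 0 ≤ ∑ j ∈ Finset.range (r + 2), l2 (y j) :=
        Finset.sum_nonneg fun j _ => l2_nonneg _
      calc |nsq (Φ.mulVec x) - nsq x| ≤ δ * (∑ j ∈ Finset.range (r + 2), l2 (y j)) ^ 2 :=
            hkey
      _ ≤ δ * ((Real.sqrt 2 + η) * l2 x) ^ 2 := by
          apply mul_le_mul_of_nonneg_left _ hδ0
          exact pow_le_pow_left₀ hsn0 hsumnorm 2
      _ = δ * (Real.sqrt 2 + η) ^ 2 * nsq x := by
          rw [mul_pow, hnsqx]; ring
  rw [abs_le] at hmain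
  have hn := nsq_nonneg x
  constructor
  · nlinarith [hmain.1]
  · nlinarith [hmain.2]

lemma part_two (nn dd m e : ℕ → ℕ) (Φ : ∀ k, Matrix (Fin (nn k)) (Fin (dd k)) ℝ)
    (hm : Filter.Tendsto (fun k => m k) Filter.atTop Filter.atTop)
    (_he : Filter.Tendsto (fun k => e k) Filter.atTop Filter.atTop)
    (heo : Filter.Tendsto (fun k => (e k : ℝ) / (m k : ℝ)) Filter.atTop (nhds 0))
    (_hle : ∀ k, e k ≤ m k)
    (hrip : ∀ k, ripConst (Φ k) (m k + 1) < 1 / Real.sqrt ((m k : ℝ) + 1)) :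
    ∃ o : ℕ → ℝ, Filter.Tendsto o Filter.atTop (nhds 0) ∧
      ∀ k, ripConst (Φ k) (m k + 1 + e k) ≤
        2 * (1 + o k) / Real.sqrt ((m k : ℝ) + 1) := by
  classical
  set A : ℕ → ℕ := fun k => (m k + 1) / 2 with hA
  set E : ℕ → ℕ := fun k => m k + 1 + e k - 2 * ((m k + 1) / 2) with hE
  set η : ℕ → ℝ := fun k =>
    Real.sqrt (((E k / A k + 1 : ℕ) : ℝ) * (E k : ℝ) / (2 * (A k : ℝ))) with hη
  set ε : ℕ → ℝ := fun k => Real.sqrt 2 * η k + η k ^ 2 / 2 with hε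
  set q : ℕ → ℝ := fun k =>
    ripConst (Φ k) (m k + 1 + e k) * Real.sqrt ((m k : ℝ) + 1) / 2 - 1 with hq
  have hsqrt2 : Real.sqrt 2 ^ 2 = 2 := Real.sq_sqrt (by norm_num)
  have hηnonneg : ∀ k, 0 ≤ η k := fun k => Real.sqrt_nonneg _
  have hmge : ∀ᶠ k in Filter.atTop, 2 ≤ m k := hm.eventually_ge_atTop 2
  -- the key eventual bound : q k ≤ ε k
  have hqε : ∀ᶠ k in Filter.atTop, q k ≤ ε k := by
    filter_upwards [hmge] with k hk
    have hA1 : 1 ≤ A k := by simp only [hA]; omega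
    have hAE : 2 * A k + E k = m k + 1 + e k := by simp only [hA, hE]; omega
    have hstep := refined_bound (Φ k) (A k) (E k) (by omega)
    rw [hAE] at hstep
    have hmono : ripConst (Φ k) (2 * A k) ≤ ripConst (Φ k) (m k + 1) :=
      ripConst_mono _ (by simp only [hA]; omega)
    have hs : (0 : ℝ) < Real.sqrt ((m k : ℝ) + 1) := Real.sqrt_pos.2 (by positivity)
    have hchain : ripConst (Φ k) (m k + 1 + e k) ≤
        1 / Real.sqrt ((m k : ℝ) + 1) * (Real.sqrt 2 + η k) ^ 2 := by
      calc ripConst (Φ k) (m k + 1 + e k)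
          ≤ ripConst (Φ k) (2 * A k) * (Real.sqrt 2 + η k) ^ 2 := hstep
      _ ≤ 1 / Real.sqrt ((m k : ℝ) + 1) * (Real.sqrt 2 + η k) ^ 2 :=
          mul_le_mul_of_nonneg_right (hmono.trans (hrip k).le) (sq_nonneg _)
    have hmul : ripConst (Φ k) (m k + 1 + e k) * Real.sqrt ((m k : ℝ) + 1) ≤
        (Real.sqrt 2 + η k) ^ 2 := by
      calc ripConst (Φ k) (m k + 1 + e k) * Real.sqrt ((m k : ℝ) + 1)
          ≤ (1 / Real.sqrt ((m k : ℝ) + 1) * (Real.sqrt 2 + η k) ^ 2) *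
              Real.sqrt ((m k : ℝ) + 1) := mul_le_mul_of_nonneg_right hchain hs.le
      _ = (Real.sqrt 2 + η k) ^ 2 := by field_simp
    have hexp : (Real.sqrt 2 + η k) ^ 2 = 2 + 2 * Real.sqrt 2 * η k + η k ^ 2 := by
      rw [add_sq, hsqrt2]
    rw [hexp] at hmul
    simp only [hq, hε]
    linarith
  -- tendsto ε → 0
  have hm' : Filter.Tendsto (fun k => ((m k : ℕ) : ℝ)) Filter.atTop Filter.atTop :=
    tendsto_natCast_atTop_atTop.comp hm
  have hminv : Filter.Tendsto (fun k => 1 / ((m k : ℕ) : ℝ)) Filter.atTop (nhds 0) := by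
    simp only [one_div]
    exact tendsto_inv_atTop_zero.comp hm'
  have h1 : Filter.Tendsto (fun k => ((e k : ℝ) + 1) / (m k : ℝ)) Filter.atTop (nhds 0) := by
    have h := heo.add hminv
    rw [add_zero] at h
    apply h.congr
    intro k
    rw [← add_div]
  have h2 : Filter.Tendsto (fun k => (2 * (e k : ℝ) + 2) / (m k : ℝ)) Filter.atTop
      (nhds 0) := by
    have h := h1.const_mul (2 : ℝ)
    rw [mul_zero] at h
    apply h.congr
    intro k
    ring
  have hg : Filter.Tendsto (fun k => ((2 * (e k : ℝ) + 2) / (m k : ℝ) + 1) *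
      (((e k : ℝ) + 1) / (m k : ℝ))) Filter.atTop (nhds 0) := by
    have h := (h2.add_const (1 : ℝ)).mul h1
    simpa using h
  have hXbound : ∀ᶠ k in Filter.atTop,
      ((E k / A k + 1 : ℕ) : ℝ) * (E k : ℝ) / (2 * (A k : ℝ)) ≤
        ((2 * (e k : ℝ) + 2) / (m k : ℝ) + 1) * (((e k : ℝ) + 1) / (m k : ℝ)) := by
    filter_upwards [hmge] with k hk
    have hA1 : 1 ≤ A k := by simp only [hA]; omega
    have h2A : m k ≤ 2 * A k ∧ 2 * A k ≤ m k + 1 := by simp only [hA]; omega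
    have hEk : E k ≤ e k + 1 := by simp only [hE]; omega
    have hA0 : (0 : ℝ) < (A k : ℝ) := by exact_mod_cast hA1
    have hm0 : (0 : ℝ) < (m k : ℝ) := by
      have : 0 < m k := by omega
      exact_mod_cast this
    have hAr : (m k : ℝ) ≤ 2 * (A k : ℝ) := by exact_mod_cast h2A.1
    have hEr : (E k : ℝ) ≤ (e k : ℝ) + 1 := by exact_mod_cast hEk
    have hE0 : (0 : ℝ) ≤ (E k : ℝ) := Nat.cast_nonneg _
    have he0 : (0 : ℝ) ≤ (e k : ℝ) := Nat.cast_nonneg _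
    have hcast : ((E k / A k + 1 : ℕ) : ℝ) ≤ (E k : ℝ) / (A k : ℝ) + 1 := by
      push_cast
      have := Nat.cast_div_le (α := ℝ) (m := E k) (n := A k)
      linarith
    have step1 : (E k : ℝ) / (A k : ℝ) ≤ (2 * (e k : ℝ) + 2) / (m k : ℝ) := by
      rw [div_le_div_iff₀ hA0 hm0]
      nlinarith
    have step2 : (E k : ℝ) / (2 * (A k : ℝ)) ≤ ((e k : ℝ) + 1) / (m k : ℝ) := by
      rw [div_le_div_iff₀ (by linarith) hm0]
      nlinarith
    calc ((E k / A k + 1 : ℕ) : ℝ) * (E k : ℝ) / (2 * (A k : ℝ))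
        = ((E k / A k + 1 : ℕ) : ℝ) * ((E k : ℝ) / (2 * (A k : ℝ))) := by
          rw [mul_div_assoc]
    _ ≤ ((E k : ℝ) / (A k : ℝ) + 1) * ((E k : ℝ) / (2 * (A k : ℝ))) := by
        apply mul_le_mul_of_nonneg_right hcast
        positivity
    _ ≤ ((2 * (e k : ℝ) + 2) / (m k : ℝ) + 1) * (((e k : ℝ) + 1) / (m k : ℝ)) := by
        apply mul_le_mul (by linarith) step2 (by positivity)
        positivity
  have hX : Filter.Tendsto (fun k =>
      ((E k / A k + 1 : ℕ) : ℝ) * (E k : ℝ) / (2 * (A k : ℝ))) Filter.atTop (nhds 0) :=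
    squeeze_zero' (Filter.Eventually.of_forall fun k => by positivity) hXbound hg
  have hηt : Filter.Tendsto η Filter.atTop (nhds 0) := by
    have h := (Real.continuous_sqrt.tendsto 0).comp hX
    rw [Real.sqrt_zero] at h
    exact h
  have hεt : Filter.Tendsto ε Filter.atTop (nhds 0) := by
    have hsq : Filter.Tendsto (fun k => η k ^ 2) Filter.atTop (nhds 0) := by
      have h := hηt.pow 2
      simpa using h
    have h := (hηt.const_mul (Real.sqrt 2)).add (hsq.div_const 2)
    simp only [mul_zero, zero_div, add_zero] at h
    exact h
  have hmax : ∀ᶠ k in Filter.atTop, max (ε k) (q k) = ε k := by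
    filter_upwards [hqε] with k hk
    exact max_eq_left hk
  have htend : Filter.Tendsto (fun k => max (ε k) (q k)) Filter.atTop (nhds 0) :=
    hεt.congr' (hmax.mono fun k hk => hk.symm)
  refine ⟨fun k => max (ε k) (q k), htend, ?_⟩
  intro k
  have hs : (0 : ℝ) < Real.sqrt ((m k : ℝ) + 1) := Real.sqrt_pos.2 (by positivity)
  have hqk : ripConst (Φ k) (m k + 1 + e k) * Real.sqrt ((m k : ℝ) + 1) / 2 - 1 ≤
      max (ε k) (q k) := by
    have h := le_max_right (ε k) (q k)
    simpa [hq] using h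
  rw [le_div_iff₀ hs]
  linarith

/-- (i) for positive integers `a, b`, the RIP constants satisfy
`δ_{ab} ≤ b · δ_{2a}`; (ii) consequently, along any sequence with `ē, m → ∞` and
`ē = o(m)`, the OMP condition `δ_{m+1} < 1/√(m+1)` implies
`δ_{m+1+ē} ≤ 2(1 + o(1))/√(m+1)`. -/
theorem stmt19 :
    (∀ (n d : ℕ) (Φ : Matrix (Fin n) (Fin d) ℝ) (a b : ℕ), 0 < a → 0 < b →
      ripConst Φ (a * b) ≤ (b : ℝ) * ripConst Φ (2 * a)) ∧
    (∀ (nn dd m e : ℕ → ℕ) (Φ : ∀ k, Matrix (Fin (nn k)) (Fin (dd k)) ℝ),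
      Filter.Tendsto (fun k => m k) Filter.atTop Filter.atTop →
      Filter.Tendsto (fun k => e k) Filter.atTop Filter.atTop →
      Filter.Tendsto (fun k => (e k : ℝ) / (m k : ℝ)) Filter.atTop (nhds 0) →
      (∀ k, e k ≤ m k) →
      (∀ k, ripConst (Φ k) (m k + 1) < 1 / Real.sqrt ((m k : ℝ) + 1)) →
      ∃ o : ℕ → ℝ, Filter.Tendsto o Filter.atTop (nhds 0) ∧
        ∀ k, ripConst (Φ k) (m k + 1 + e k) ≤
          2 * (1 + o k) / Real.sqrt ((m k : ℝ) + 1)) := by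
  constructor
  · intro n d Φ a b ha hb
    exact part_one Φ a b ha hb
  · intro nn dd m e Φ hm he heo hle hrip
    exact part_two nn dd m e Φ hm he heo hle hrip
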